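/- Let T be a nonempty well-founded tree on ℕ, and define by well-founded recursion on the nodes of T the combinatorial pregame G(s) for s ∈ T, in which Left's options from G(s) are exactly the games G(t) for t a child of s in T, and Right has no options. Then G([]), the game at the root of T, is equivalent as a combinatorial game (in the sense of Conway game equivalence of pregames) to the ordinal game associated to rank(T), i.e. to the pregame of the ordinal rank(T) in which Left may move to any strictly smaller ordinal and Right has no moves. In particular, the game value of the climbing-through-T game, in which black climbs through T while white passes, equals the rank of T as a well-founded tree. -/

import Mathlib

universe u

/-- A tree on `ℕ` is a set of finite sequences of natural numbers
closed under taking prefixes. -/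
def IsTree (T : Set (List ℕ)) : Prop :=
  ∀ s ∈ T, ∀ t : List ℕ, t <+: s → t ∈ T

/-- `ChildOf T t s` means `t` is a child of `s` in `T`, i.e. `t ∈ T` and
`t = s ++ [n]` for some `n : ℕ`. -/
def ChildOf (T : Set (List ℕ)) (t s : List ℕ) : Prop :=
  t ∈ T ∧ ∃ n : ℕ, t = s ++ [n]

/-- Given that the tree `T` is well-founded (the "is a child of" relation admits no
infinite ascending chain), the rank of a node `s` is defined by well-founded recursion:
`rank s = sup { rank t + 1 : t a child of s in T }`.  (This is exactly what `Acc.rank`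
computes for the accessibility witness of `s`.) -/
noncomputable def treeRank {T : Set (List ℕ)} (hwf : WellFounded (ChildOf T))
    (s : List ℕ) : Ordinal :=
  (hwf.apply s).rank

namespace SetTheory

/-- Conway pregames (removed from Mathlib; restored here with the old Mathlib definition). -/
inductive PGame : Type (u + 1)
  | mk : ∀ α β : Type u, (α → PGame) → (β → PGame) → PGame

namespace PGame

/-- `IsOption y x`: `y` is a (left or right) option of `x`. -/
inductive IsOption : PGame.{u} → PGame.{u} → Prop
  | moveLeft {l r : Type u} {L : l → PGame} {R : r → PGame} (i : l) : IsOption (L i) (mk l r L R)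
  | moveRight {l r : Type u} {L : l → PGame} {R : r → PGame} (j : r) : IsOption (R j) (mk l r L R)

theorem wf_isOption : WellFounded IsOption.{u} :=
  ⟨fun x => by
    induction x with
    | mk l r L R ihL ihR =>
      exact Acc.intro _ (fun y h => by cases h <;> first | exact ihL _ | exact ihR _)⟩

instance : WellFoundedRelation PGame.{u} := ⟨IsOption, wf_isOption⟩

/-- The old Mathlib simultaneous definition of `≤` and `⧏` on pregames. -/
def leLF : PGame.{u} → PGame.{u} → Prop × Prop
  | mk xl xr xL xR, mk yl yr yL yR =>
    ((∀ i, (leLF (xL i) (mk yl yr yL yR)).2) ∧ ∀ j, (leLF (mk xl xr xL xR) (yR j)).2,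
      (∃ i, (leLF (mk xl xr xL xR) (yL i)).1) ∨ ∃ j, (leLF (xR j) (mk yl yr yL yR)).1)
termination_by x y => (x, y)
decreasing_by
  all_goals first
    | exact Prod.Lex.left _ _ (IsOption.moveLeft _)
    | exact Prod.Lex.left _ _ (IsOption.moveRight _)
    | exact Prod.Lex.right _ (IsOption.moveLeft _)
    | exact Prod.Lex.right _ (IsOption.moveRight _)

instance : LE PGame.{u} := ⟨fun x y => (leLF x y).1⟩

/-- Equivalence of pregames: `x ≤ y ∧ y ≤ x`. -/
def Equiv (x y : PGame.{u}) : Prop := x ≤ y ∧ y ≤ x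

instance : HasEquiv PGame.{u} := ⟨Equiv⟩

end PGame

end SetTheory

/-- The pregame of an ordinal (old `Ordinal.toPGame`): Left may move to any smaller ordinal,
Right has no moves. -/
noncomputable def Ordinal.toPGame (o : Ordinal.{u}) : SetTheory.PGame.{u} :=
  ⟨o.ToType, PEmpty, fun x => (Ordinal.typein (α := o.ToType) (· < ·) x).toPGame, PEmpty.elim⟩
termination_by o
decreasing_by exact Ordinal.typein_lt_self x

open SetTheory in
/-- The combinatorial pregame `G s` associated by well-founded recursion to a node `s`
of the well-founded tree `T`: Left's options from `G s` are exactly the games `G t`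
for `t` a child of `s` in `T`, and Right has no options. -/
noncomputable def treeGame {T : Set (List ℕ)} (hwf : WellFounded (ChildOf T)) :
    List ℕ → PGame.{0} :=
  hwf.fix fun s IH =>
    PGame.mk {t : List ℕ // ChildOf T t s} PEmpty
      (fun t => IH t.1 t.2) PEmpty.elim

open SetTheory in
theorem treeGame_eq {T : Set (List ℕ)} (hwf : WellFounded (ChildOf T)) (s : List ℕ) :
    treeGame hwf s =
      PGame.mk {t : List ℕ // ChildOf T t s} PEmpty
        (fun t => treeGame hwf t.1) PEmpty.elim := by
  rw [treeGame, WellFounded.fix_eq]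

open SetTheory in
theorem PGame_lf_of_le_opt {β r : Type u} {M : β → PGame.{u}} {R : r → PGame.{u}}
    (x : PGame.{u}) (h : ∃ j, x ≤ M j) : (PGame.leLF x (PGame.mk β r M R)).2 := by
  cases x
  rw [PGame.leLF]
  exact Or.inl h

open SetTheory in
theorem PGame_le_of_forall {α r β : Type u} {L : α → PGame.{u}} {R : r → PGame.{u}}
    {M : β → PGame.{u}} (h : ∀ i, ∃ j, L i ≤ M j) :
    PGame.mk α r L R ≤ PGame.mk β PEmpty M PEmpty.elim := by
  show (PGame.leLF _ _).1
  rw [PGame.leLF]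
  exact ⟨fun i => PGame_lf_of_le_opt _ (h i), fun j => j.elim⟩

open SetTheory in
theorem toPGame_eq' (o : Ordinal.{u}) : o.toPGame =
    PGame.mk o.ToType PEmpty (fun x => (Ordinal.typein (α := o.ToType) (· < ·) x).toPGame)
      PEmpty.elim := by
  rw [Ordinal.toPGame]

open SetTheory in
theorem treeGame_equiv (T : Set (List ℕ)) (hwf : WellFounded (ChildOf T)) (s : List ℕ) :
    treeGame hwf s ≤ (treeRank hwf s).toPGame ∧
      ∀ b, b ≤ treeRank hwf s → b.toPGame ≤ treeGame hwf s := by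
  induction s using hwf.induction with
  | _ s IH =>
    have hrank : treeRank hwf s
        = ⨆ t : {t // ChildOf T t s}, Order.succ (treeRank hwf t.1) := by
      rw [treeRank, Acc.rank_eq]
      congr 1
    constructor
    · rw [treeGame_eq, toPGame_eq']
      refine PGame_le_of_forall (fun i => ?_)
      have hlt : treeRank hwf i.1 < treeRank hwf s := by
        rw [hrank]
        exact lt_of_lt_of_le (Order.lt_succ _)
          (Ordinal.le_iSup (fun t : {t // ChildOf T t s} =>
            Order.succ (treeRank hwf t.1)) i)
      obtain ⟨x, hx⟩ := Ordinal.typein_surj (α := (treeRank hwf s).ToType) (· < ·)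
        (o := treeRank hwf i.1) (by rwa [Ordinal.type_toType])
      refine ⟨x, ?_⟩
      simp only [hx]
      exact (IH i.1 i.2).1
    · intro b hb
      rw [treeGame_eq, toPGame_eq']
      refine PGame_le_of_forall (fun x => ?_)
      have hlt2 : Ordinal.typein (α := b.ToType) (· < ·) x
          < ⨆ t : {t // ChildOf T t s}, Order.succ (treeRank hwf t.1) := by
        rw [← hrank]; exact lt_of_lt_of_le (Ordinal.typein_lt_self x) hb
      rw [Ordinal.lt_iSup_iff] at hlt2
      obtain ⟨t, ht⟩ := hlt2
      exact ⟨t, (IH t.1 t.2).2 _ (Order.lt_succ_iff.1 ht)⟩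

/-- main -/
theorem treeGame_equiv_toPGame_rank (T : Set (List ℕ)) (hT : IsTree T)
    (hne : ([] : List ℕ) ∈ T) (hwf : WellFounded (ChildOf T)) :
    treeGame hwf [] ≈ (treeRank hwf ([] : List ℕ)).toPGame := by
  exact ⟨(treeGame_equiv T hwf []).1, (treeGame_equiv T hwf []).2 _ le_rfl⟩
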